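/- Let G be a sublattice of E and E an ideal of a vector lattice F. If a net {x_α} in G is E-order convergent to 0 (as a net in G), then {x_α} is F-order convergent to 0. -/
import Mathlib


/-- A net `x` in a vector lattice `F` is `F`-order convergent to `a`: there is a
nonempty downward-directed family `D` in `F` with infimum `0` (the range of a net
`y_β ↓ 0` in `F`) such that for each `d ∈ D`, eventually `|x α - a| ≤ d`. -/
def FOrderConv {F : Type*} [Lattice F] [AddCommGroup F] {ι : Type*} [Preorder ι]
    (x : ι → F) (a : F) : Prop :=
  ∃ D : Set F, D.Nonempty ∧ DirectedOn (· ≥ ·) D ∧ IsGLB D 0 ∧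
    ∀ d ∈ D, ∃ α₀ : ι, ∀ α, α₀ ≤ α → |x α - a| ≤ d

/-- Order convergence relative to a sublattice `E` of `F`: the dominating family lies
in `E` and decreases to `0` *in `E`* (`0` is its greatest lower bound among elements
of `E`). -/
def OrderConvIn {F : Type*} [Lattice F] [AddCommGroup F] (E : Set F) {ι : Type*} [Preorder ι]
    (x : ι → F) (a : F) : Prop :=
  ∃ D : Set F, D ⊆ E ∧ D.Nonempty ∧ DirectedOn (· ≥ ·) D ∧
    (0 ∈ lowerBounds D ∧ ∀ b ∈ E, b ∈ lowerBounds D → b ≤ 0) ∧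
    ∀ d ∈ D, ∃ α₀ : ι, ∀ α, α₀ ≤ α → |x α - a| ≤ d

/-- Let `G` be a sublattice of an ideal `E` of `F`. A net in `G` that is `E`-order
convergent to `0` is `F`-order convergent to `0`. -/
theorem fOrderConv_of_idealOrderConv {F : Type*} [Lattice F] [AddCommGroup F]
    [CovariantClass F F (· + ·) (· ≤ ·)] [Module ℝ F]
    (E : Set F)
    (hEsup : ∀ a ∈ E, ∀ b ∈ E, a ⊔ b ∈ E) (hEinf : ∀ a ∈ E, ∀ b ∈ E, a ⊓ b ∈ E)
    (hEadd : ∀ a ∈ E, ∀ b ∈ E, a + b ∈ E) (hEsmul : ∀ (c : ℝ), ∀ a ∈ E, c • a ∈ E)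
    (hEsolid : ∀ u v : F, |u| ≤ |v| → v ∈ E → u ∈ E)
    (G : Set F) (hGE : G ⊆ E)
    (hGsup : ∀ a ∈ G, ∀ b ∈ G, a ⊔ b ∈ G) (hGinf : ∀ a ∈ G, ∀ b ∈ G, a ⊓ b ∈ G)
    (hGadd : ∀ a ∈ G, ∀ b ∈ G, a + b ∈ G) (hGsmul : ∀ (c : ℝ), ∀ a ∈ G, c • a ∈ G)
    {ι : Type*} [Nonempty ι] [Preorder ι] [IsDirected ι (· ≤ ·)]
    (x : ι → F) (hx : ∀ α, x α ∈ G)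
    (h : OrderConvIn E x 0) : FOrderConv x 0 := by
  obtain ⟨D, hDE, hDne, hDdir, ⟨hlb, hglb⟩, hconv⟩ := h
  refine ⟨D, hDne, hDdir, ⟨hlb, ?_⟩, hconv⟩
  intro b hb
  have hble : ∀ d ∈ D, b ⊔ 0 ≤ d := by
    intro d hd
    exact sup_le (hb hd) (hlb hd)
  obtain ⟨d₀, hd₀⟩ := hDne
  have hd₀pos : (0 : F) ≤ d₀ := hlb hd₀
  have habs : |b ⊔ 0| ≤ |d₀| := by
    rw [abs_of_nonneg le_sup_right, abs_of_nonneg hd₀pos]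
    exact hble d₀ hd₀
  have hmem : b ⊔ 0 ∈ E := hEsolid _ _ habs (hDE hd₀)
  have : b ⊔ 0 ≤ 0 := hglb _ hmem hble
  exact le_trans le_sup_left this
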